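/- Let T > 0, μ ∈ ℝ, and z < y be real numbers, and let X : [0,T] → ℝ be continuous. Define ω(t) = X(t) − X(0) − μt. If X(0) ≤ y set L(t) = − min_{0≤v≤t} min( y − X(0) − 2ω(v), 0 ) and Θ̃(t) = ω(t) − L(t); if X(0) > y set Θ̃(t) = −ω(t). Define Y(t) = y + μt − Θ̃(t) and Z(t) = z + μt + Θ̃(t). Then: (a) if z < X(0) ≤ y, then Z(t) < X(t) ≤ Y(t) (and in particular Z(t) < Y(t)) for all t ∈ [0,T]; (b) if X(0) ≤ z or X(0) > y, then it is not the case that both Z(T) < X(T) ≤ Y(T) and Z(t) < Y(t) for all t ∈ [0,T]. -/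
import Mathlib


/-- Theorem 1.3(a)/(b): the dynamical system built from the Skorohod-type flow
`Θ̃_{y,T}` preserves the duality function `Γ((z,y),x) = 1_{z < x ≤ y}`. -/
theorem stmt2 (T μ z y : ℝ) (hT : 0 < T) (hzy : z < y)
    (X : ℝ → ℝ) (hX : ContinuousOn X (Set.Icc 0 T))
    (ω L Θ Y Z : ℝ → ℝ)
    (hω : ∀ t, ω t = X t - X 0 - μ * t)
    (hL : ∀ t, L t = -(⨅ v : Set.Icc (0 : ℝ) t, min (y - X 0 - 2 * ω v.1) 0))
    (hΘ : ∀ t, Θ t = if X 0 ≤ y then ω t - L t else -ω t)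
    (hY : ∀ t, Y t = y + μ * t - Θ t)
    (hZ : ∀ t, Z t = z + μ * t + Θ t) :
    ((z < X 0 ∧ X 0 ≤ y) →
      ∀ t ∈ Set.Icc (0 : ℝ) T, Z t < X t ∧ X t ≤ Y t ∧ Z t < Y t) ∧
    ((X 0 ≤ z ∨ y < X 0) →
      ¬((Z T < X T ∧ X T ≤ Y T) ∧ ∀ t ∈ Set.Icc (0 : ℝ) T, Z t < Y t)) := by
  have hω0 : ω 0 = 0 := by rw [hω]; ring
  set g : ℝ → ℝ := fun t => y - X 0 - 2 * ω t with hgdef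
  set f : ℝ → ℝ := fun t => min (g t) 0 with hfdef
  have hωc : ContinuousOn ω (Set.Icc 0 T) := by
    have h1 : ContinuousOn (fun t => X t - X 0 - μ * t) (Set.Icc 0 T) :=
      (hX.sub continuousOn_const).sub ((continuous_const.mul continuous_id).continuousOn)
    exact h1.congr fun t _ => hω t
  have hgc : ContinuousOn g (Set.Icc 0 T) :=
    continuousOn_const.sub (continuousOn_const.mul hωc)
  have hfc : ContinuousOn f (Set.Icc 0 T) := hgc.inf continuousOn_const
  have hbdd : ∀ t ∈ Set.Icc (0:ℝ) T,
      BddBelow (Set.range fun v : Set.Icc (0:ℝ) t => f v.1) := by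
    intro t ht
    have hsub : Set.Icc (0:ℝ) t ⊆ Set.Icc 0 T := Set.Icc_subset_Icc le_rfl ht.2
    have h2 := isCompact_Icc.bddBelow_image (hfc.mono hsub)
    rwa [Set.image_eq_range] at h2
  have hLf : ∀ t, L t = -(⨅ v : Set.Icc (0:ℝ) t, f v.1) := fun t => hL t
  constructor
  · rintro ⟨hz0, h0y⟩ t ht
    haveI hne : Nonempty (Set.Icc (0:ℝ) t) := ⟨⟨0, Set.left_mem_Icc.mpr ht.1⟩⟩
    have h1 : (⨅ v : Set.Icc (0:ℝ) t, f v.1) ≤ f t :=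
      ciInf_le (hbdd t ht) ⟨t, ⟨ht.1, le_rfl⟩⟩
    have h2 : f t ≤ 0 := min_le_right _ _
    have h3 : f t ≤ g t := min_le_left _ _
    have hgt : g t = y - X 0 - 2 * ω t := rfl
    have hL0 : 0 ≤ L t := by rw [hLf t]; linarith
    have hLg : -(g t) ≤ L t := by rw [hLf t]; linarith
    have hΘt : Θ t = ω t - L t := by rw [hΘ t, if_pos h0y]
    have hXt : X t = X 0 + μ * t + ω t := by rw [hω t]; ring
    have hZX : Z t < X t := by rw [hZ t, hΘt]; linarith [hXt]
    have hXY : X t ≤ Y t := by rw [hY t, hΘt]; linarith [hXt, hLg, hgt]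
    exact ⟨hZX, hXY, lt_of_lt_of_le hZX hXY⟩
  · rintro hcase ⟨⟨hZT, hXT⟩, hZY⟩
    rcases hcase with h0z | hy0
    · -- X 0 ≤ z
      have h0y : X 0 ≤ y := le_of_lt (lt_of_le_of_lt h0z hzy)
      have hΘe : ∀ t, Θ t = ω t - L t := fun t => by rw [hΘ t, if_pos h0y]
      set c : ℝ := X 0 - z with hc
      have hc0 : c ≤ 0 := by rw [hc]; linarith
      have hLT : -c < L T := by
        rw [hZ T, hΘe T, hω T] at hZT
        rw [hc]; linarith
      have hTmem : (T:ℝ) ∈ Set.Icc (0:ℝ) T := ⟨le_of_lt hT, le_rfl⟩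
      have hinf : (⨅ v : Set.Icc (0:ℝ) T, f v.1) < c := by
        rw [hLf T] at hLT; linarith
      haveI hne : Nonempty (Set.Icc (0:ℝ) T) := ⟨⟨0, Set.left_mem_Icc.mpr (le_of_lt hT)⟩⟩
      obtain ⟨⟨v0, hv0⟩, hfv0⟩ := exists_lt_of_ciInf_lt hinf
      have hgv0 : g v0 < c := by
        rcases min_lt_iff.mp hfv0 with h | h
        · exact h
        · linarith
      have hg0 : c < g 0 := by
        have hg0e : g 0 = y - X 0 - 2 * ω 0 := rfl
        rw [hω0] at hg0e
        rw [hg0e, hc]; linarith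
      set S : Set ℝ := Set.Icc 0 v0 ∩ g ⁻¹' Set.Iic c with hS
      have hsubv0 : Set.Icc (0:ℝ) v0 ⊆ Set.Icc 0 T := Set.Icc_subset_Icc le_rfl hv0.2
      have hSclosed : IsClosed S :=
        (hgc.mono hsubv0).preimage_isClosed_of_isClosed isClosed_Icc isClosed_Iic
      have hSne : S.Nonempty := ⟨v0, ⟨hv0.1, le_rfl⟩, le_of_lt hgv0⟩
      have hSbdd : BddBelow S := ⟨0, fun x hx => hx.1.1⟩
      set s := sInf S with hsdef
      obtain ⟨hs1, hs2⟩ := hSclosed.csInf_mem hSne hSbdd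
      have hsT : s ∈ Set.Icc (0:ℝ) T := hsubv0 hs1
      have hgs_le : g s ≤ c := hs2
      have hs_pos : 0 < s := by
        rcases lt_or_eq_of_le hs1.1 with h | h
        · exact h
        · exfalso; rw [← hsdef] at h; rw [← h] at hgs_le; linarith
      have hlt : ∀ t ∈ Set.Ico (0:ℝ) s, c < g t := by
        intro t ht'
        by_contra h
        push_neg at h
        have htS : t ∈ S := ⟨⟨ht'.1, le_trans (le_of_lt ht'.2) hs1.2⟩, h⟩
        exact absurd (csInf_le hSbdd htS) (not_le.mpr ht'.2)
      have hgs_ge : c ≤ g s := by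
        haveI hnb : (nhdsWithin s (Set.Ico (0:ℝ) s)).NeBot := by
          rw [← mem_closure_iff_nhdsWithin_neBot, closure_Ico (ne_of_lt hs_pos)]
          exact ⟨le_of_lt hs_pos, le_rfl⟩
        have hsub2 : Set.Ico (0:ℝ) s ⊆ Set.Icc 0 T :=
          fun x hx => ⟨hx.1, le_trans (le_of_lt hx.2) hsT.2⟩
        have htend : Filter.Tendsto g (nhdsWithin s (Set.Ico (0:ℝ) s)) (nhds (g s)) :=
          (hgc s hsT).mono hsub2
        exact ge_of_tendsto htend
          (eventually_mem_nhdsWithin.mono fun t ht' => le_of_lt (hlt t ht'))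
      have hgs : g s = c := le_antisymm hgs_le hgs_ge
      have hfs : f s = c := by
        show min (g s) 0 = c
        rw [hgs, min_eq_left hc0]
      have hinfs : (⨅ v : Set.Icc (0:ℝ) s, f v.1) = c := by
        haveI hne' : Nonempty (Set.Icc (0:ℝ) s) := ⟨⟨0, Set.left_mem_Icc.mpr hs1.1⟩⟩
        apply le_antisymm
        · calc (⨅ v : Set.Icc (0:ℝ) s, f v.1) ≤ f s :=
                ciInf_le (hbdd s hsT) ⟨s, ⟨hs1.1, le_rfl⟩⟩
            _ = c := hfs
        · apply le_ciInf
          rintro ⟨v, hv⟩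
          rcases lt_or_eq_of_le hv.2 with h | h
          · exact le_min (le_of_lt (hlt v ⟨hv.1, h⟩)) hc0
          · show c ≤ f v
            rw [h, hfs]
      have hLs : L s = -c := by rw [hLf s, hinfs]
      have hcon := hZY s hsT
      rw [hZ s, hY s, hΘe s, hLs] at hcon
      have hgs' : y - X 0 - 2 * ω s = c := hgs
      rw [hc] at hgs'
      linarith
    · have hΘT : Θ T = -ω T := by rw [hΘ T, if_neg (not_le.mpr hy0)]
      rw [hY T, hΘT, hω T] at hXT
      linarith
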